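/- Let Σ = (0,∞], a, b ∈ ℕ with a, b > 1, c > 0, and fix an infinite word z over Σ with z_k ≠ ∞ for all k ∈ ω_b, k ≥ 2. Let Σ_{b,c}^∞ = { y ∈ Σ^∞ : l(y) ≥ 2, y₁ = c, and y_k = ∞ for all k ∉ ω_b with 2 ≤ k ≤ l(y) }. Then the mapping Θ defined by Θ(x)₁ = c, Θ(x)_k = ∞ for k ∉ ω_b with 2 ≤ k ≤ l(x)+1, and Θ(x)_k = a·x_{k/b} + z_k for k ∈ ω_b with k/b ≤ l(x), satisfies p_B(Θ(x), Θ(y)) ≤ (1/2)·p_B(x,y) for all x, y ∈ Σ_{b,c}^∞, and has a unique fixed point v ∈ Σ_{b,c}^∞, which is an infinite word. -/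

import Mathlib

open scoped NNReal ENNReal

/-- A nonempty finite or infinite word over an alphabet `α`: letters are indexed
from `1`, the domain of defined letters is an initial segment. -/
structure PWord (α : Type*) where
  toFun : ℕ → Option α
  map_zero' : toFun 0 = none
  map_one' : (toFun 1).isSome = true
  mono' : ∀ n, 1 ≤ n → (toFun (n + 1)).isSome = true → (toFun n).isSome = true

/-- The length `l(x) ∈ [1,∞]` of a word. -/
noncomputable def PWord.len {α : Type*} (x : PWord α) : ℕ∞ :=
  ⨆ n ∈ {n : ℕ | (x.toFun n).isSome = true}, (n : ℕ∞)

/-- `l(x,y)`: the length of the longest common prefix of `x` and `y`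
(`0` if they have no common prefix). -/
noncomputable def lcp {α : Type*} (x y : PWord α) : ℕ∞ :=
  ⨆ n ∈ {n : ℕ | ∀ k, 1 ≤ k → k ≤ n →
      (x.toFun k).isSome = true ∧ x.toFun k = y.toFun k}, (n : ℕ∞)

/-- `2^{-m}` for `m ∈ ℕ∞`, with `2^{-∞} = 0`. -/
noncomputable def epow (m : ℕ∞) : ℝ≥0 := WithTop.recTopCoe 0 (fun n => 2⁻¹ ^ n) m

/-- The Baire partial metric `p_B(x,y) = 2^{-l(x,y)}`. -/
noncomputable def pB {α : Type*} (x y : PWord α) : ℝ≥0 := epow (lcp x y)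

/-- `ω_b = {bᵏ : k ∈ ℕ₊}`. -/
def omegaB (b : ℕ) : Set ℕ := {n | ∃ k : ℕ, 1 ≤ k ∧ n = b ^ k}

/-- The set `Σ_{b,c}^∞` of words over the alphabet `Σ = (0,∞]` of length at least `2`,
with first letter `c` and letter `∞` at every position `k ∉ ω_b`, `2 ≤ k ≤ l(y)`. -/
def Sbc (b : ℕ) (c : ℝ≥0∞) : Set (PWord ℝ≥0∞) :=
  {y | (∀ k t, y.toFun k = some t → 0 < t) ∧ 2 ≤ y.len ∧ y.toFun 1 = some c ∧
    ∀ k : ℕ, 2 ≤ k → (k : ℕ∞) ≤ y.len → k ∉ omegaB b → y.toFun k = some ⊤}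

-- helpers
theorem PWord.ext' {α : Type*} {x y : PWord α} (h : x.toFun = y.toFun) : x = y := by
  cases x; cases y; simpa using h

theorem PWord.le_len {α : Type*} {x : PWord α} {n : ℕ} (h : (x.toFun n).isSome = true) :
    (n : ℕ∞) ≤ x.len :=
  le_iSup₂ (f := fun (n : ℕ) (_ : (x.toFun n).isSome = true) => (n : ℕ∞)) n h

theorem PWord.len_eq_top {α : Type*} {x : PWord α} (h : ∀ n, 1 ≤ n → (x.toFun n).isSome = true) :
    x.len = ⊤ := by
  rw [eq_top_iff]
  refine le_of_forall_lt fun m hm => ?_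
  cases m with
  | top => simp at hm
  | coe m => exact lt_of_lt_of_le (by exact_mod_cast Nat.lt_succ_self m) (PWord.le_len (h (m+1) (by omega)))

theorem le_lcp {α : Type*} {x y : PWord α} {n : ℕ}
    (h : ∀ k, 1 ≤ k → k ≤ n → (x.toFun k).isSome = true ∧ x.toFun k = y.toFun k) :
    (n : ℕ∞) ≤ lcp x y :=
  le_iSup₂ (f := fun (n : ℕ) (_ : n ∈ {n : ℕ | ∀ k, 1 ≤ k → k ≤ n →
      (x.toFun k).isSome = true ∧ x.toFun k = y.toFun k}) => (n : ℕ∞)) n h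

theorem of_le_lcp {α : Type*} {x y : PWord α} {n : ℕ} (h : (n : ℕ∞) ≤ lcp x y) :
    ∀ k, 1 ≤ k → k ≤ n → (x.toFun k).isSome = true ∧ x.toFun k = y.toFun k := by
  by_contra hn
  push_neg at hn
  obtain ⟨k0, hk1, hk2, hk3⟩ := hn
  have hub : lcp x y ≤ ((k0 - 1 : ℕ) : ℕ∞) := by
    refine iSup₂_le fun m hm => ?_
    have : m < k0 := by
      by_contra hmk
      push_neg at hmk
      exact hk3 (hm k0 hk1 hmk).1 (hm k0 hk1 hmk).2
    exact_mod_cast Nat.le_sub_one_of_lt this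
  have := h.trans hub
  have : n ≤ k0 - 1 := by exact_mod_cast this
  omega

@[simp] theorem epow_top : epow ⊤ = 0 := rfl
@[simp] theorem epow_coe (n : ℕ) : epow (n : ℕ∞) = 2⁻¹ ^ n := rfl

theorem epow_anti {m₁ m₂ : ℕ∞} (h : m₁ ≤ m₂) : epow m₂ ≤ epow m₁ := by
  cases m₂ with
  | top => exact zero_le
  | coe m₂ =>
    cases m₁ with
    | top => simp at h
    | coe m₁ =>
      rw [epow_coe, epow_coe]
      exact pow_le_pow_of_le_one zero_le (by norm_num) (by exact_mod_cast h)

open scoped Classical in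
noncomputable def fAux (a b : ℕ) (c : ℝ≥0∞) (z : ℕ → ℝ≥0∞) : ℕ → ℝ≥0∞
  | 0 => 1
  | 1 => c
  | (k+2) => if h : 2 ≤ b ∧ (k+2) ∈ omegaB b then
      (a : ℝ≥0∞) * fAux a b c z ((k+2)/b) + z (k+2) else ⊤
  termination_by k => k
  decreasing_by exact Nat.div_lt_self (by omega) (by omega)

theorem fAux_one (a b : ℕ) (c : ℝ≥0∞) (z : ℕ → ℝ≥0∞) : fAux a b c z 1 = c := by
  simp [fAux]

theorem fAux_mem (a b : ℕ) (c : ℝ≥0∞) (z : ℕ → ℝ≥0∞) (hb : 2 ≤ b) {k : ℕ} (hk : 2 ≤ k)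
    (hkm : k ∈ omegaB b) :
    fAux a b c z k = (a : ℝ≥0∞) * fAux a b c z (k/b) + z k := by
  obtain ⟨j, rfl⟩ : ∃ j, k = j + 2 := ⟨k - 2, by omega⟩
  rw [fAux, dif_pos ⟨hb, hkm⟩]

theorem fAux_notmem (a b : ℕ) (c : ℝ≥0∞) (z : ℕ → ℝ≥0∞) {k : ℕ} (hk : 2 ≤ k)
    (hkm : ¬ (2 ≤ b ∧ k ∈ omegaB b)) : fAux a b c z k = ⊤ := by
  obtain ⟨j, rfl⟩ : ∃ j, k = j + 2 := ⟨k - 2, by omega⟩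
  rw [fAux, dif_neg hkm]

theorem fAux_pos (a b : ℕ) (c : ℝ≥0∞) (z : ℕ → ℝ≥0∞) (hc : 0 < c) (hz : ∀ k, 0 < z k)
    (k : ℕ) : 0 < fAux a b c z k := by
  match k with
  | 0 => simp [fAux]
  | 1 => simpa [fAux] using hc
  | (j+2) =>
    rw [fAux]
    split
    · exact lt_of_lt_of_le (hz _) le_add_self
    · simp

noncomputable def vWord (a b : ℕ) (c : ℝ≥0∞) (z : ℕ → ℝ≥0∞) : PWord ℝ≥0∞ where
  toFun k := if k = 0 then none else some (fAux a b c z k)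
  map_zero' := rfl
  map_one' := rfl
  mono' n hn _ := by simp only [show n ≠ 0 by omega, if_false, Option.isSome_some]

theorem vWord_len (a b : ℕ) (c : ℝ≥0∞) (z : ℕ → ℝ≥0∞) : (vWord a b c z).len = ⊤ :=
  PWord.len_eq_top fun n hn => by simp only [vWord, show n ≠ 0 by omega, if_false, Option.isSome_some]

/-- the mapping `Θ = Θ_{a,b}^z` on `Σ_{b,c}^∞` (defined by
`Θ(x)₁ = c`, `Θ(x)_k = ∞` for `k ∉ ω_b` with `2 ≤ k ≤ l(x)+1`, and
`Θ(x)_k = a·x_{k/b} + z_k` for `k ∈ ω_b` with `k/b ≤ l(x)`) satisfies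
`p_B(Θ(x),Θ(y)) ≤ (1/2) p_B(x,y)` and has a unique fixed point `v ∈ Σ_{b,c}^∞`,
which is an infinite word. -/
theorem baire_stmt11 (a b : ℕ) (ha : 1 < a) (hb : 1 < b)
    (c : ℝ≥0∞) (hc : 0 < c) (hc' : c ≠ ⊤)
    (z : ℕ → ℝ≥0∞) (hz : ∀ k, 0 < z k)
    (hz' : ∀ k, k ∈ omegaB b → 2 ≤ k → z k ≠ ⊤)
    (Θ : PWord ℝ≥0∞ → PWord ℝ≥0∞)
    (hmaps : ∀ x ∈ Sbc b c, Θ x ∈ Sbc b c)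
    (hone : ∀ x ∈ Sbc b c, (Θ x).toFun 1 = some c)
    (hinf : ∀ x ∈ Sbc b c, ∀ k : ℕ, 2 ≤ k → k ∉ omegaB b → (k : ℕ∞) ≤ x.len + 1 →
      (Θ x).toFun k = some ⊤)
    (hrec : ∀ x ∈ Sbc b c, ∀ k : ℕ, k ∈ omegaB b → ((k / b : ℕ) : ℕ∞) ≤ x.len →
      ∀ t, x.toFun (k / b) = some t → (Θ x).toFun k = some ((a : ℝ≥0∞) * t + z k)) :
    (∀ x ∈ Sbc b c, ∀ y ∈ Sbc b c, pB (Θ x) (Θ y) ≤ 2⁻¹ * pB x y) ∧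
      ∃ v ∈ Sbc b c, Θ v = v ∧ v.len = ⊤ ∧ ∀ u ∈ Sbc b c, Θ u = u → u = v := by
  -- every element of omegaB b is at least 2 and k/b ≥ 1
  have homega : ∀ k ∈ omegaB b, 2 ≤ k ∧ 1 ≤ k / b := by
    intro k hk
    obtain ⟨m, hm1, rfl⟩ := hk
    have h2 : 2 ≤ b ^ m := le_trans hb (Nat.le_self_pow (by omega) b)
    have hdiv : b ^ m / b = b ^ (m - 1) := by
      conv_lhs => rw [show m = (m - 1) + 1 by omega, pow_succ]
      exact Nat.mul_div_cancel _ (by omega)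
    refine ⟨h2, ?_⟩
    rw [hdiv]
    exact Nat.one_le_pow _ _ (by omega)
  -- the key agreement step
  have key : ∀ x ∈ Sbc b c, ∀ y ∈ Sbc b c, ∀ n : ℕ,
      (∀ k, 1 ≤ k → k ≤ n → (x.toFun k).isSome = true ∧ x.toFun k = y.toFun k) →
      ∀ k, 1 ≤ k → k ≤ n + 1 →
        ((Θ x).toFun k).isSome = true ∧ (Θ x).toFun k = (Θ y).toFun k := by
    intro x hx y hy n hn k hk1 hk2
    rcases eq_or_lt_of_le hk1 with h1 | h1
    · have e1 := hone x hx
      have e2 := hone y hy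
      subst h1
      exact ⟨by simp [e1], by rw [e1, e2]⟩
    · have hk2' : 2 ≤ k := h1
      have hn1 : 1 ≤ n := by omega
      have hxlen : (n : ℕ∞) ≤ x.len := PWord.le_len (hn n hn1 le_rfl).1
      have hylen : (n : ℕ∞) ≤ y.len := PWord.le_len (by rw [← (hn n hn1 le_rfl).2]; exact (hn n hn1 le_rfl).1)
      by_cases hkb : k ∈ omegaB b
      · obtain ⟨hk2'', h1b⟩ := homega k hkb
        have hkbn : k / b ≤ n := by
          have h2 : k / b ≤ k / 2 := Nat.div_le_div_left (by omega) (by omega)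
          omega
        obtain ⟨hsome, heq⟩ := hn (k / b) h1b hkbn
        obtain ⟨t, ht⟩ := Option.isSome_iff_exists.mp hsome
        have hkbn' : ((k / b : ℕ) : ℕ∞) ≤ (n : ℕ∞) := by exact_mod_cast hkbn
        have e1 := hrec x hx k hkb (hkbn'.trans hxlen) t ht
        have e2 := hrec y hy k hkb (hkbn'.trans hylen) t (by rw [← heq]; exact ht)
        exact ⟨by simp [e1], by rw [e1, e2]⟩
      · have hcast : ((k : ℕ) : ℕ∞) ≤ (n : ℕ∞) + 1 := by
          have : ((k : ℕ) : ℕ∞) ≤ ((n + 1 : ℕ) : ℕ∞) := by exact_mod_cast hk2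
          simpa using this
        have e1 := hinf x hx k hk2' hkb (hcast.trans (add_le_add_left hxlen 1))
        have e2 := hinf y hy k hk2' hkb (hcast.trans (add_le_add_left hylen 1))
        exact ⟨by simp [e1], by rw [e1, e2]⟩
  -- contraction
  have contract : ∀ x ∈ Sbc b c, ∀ y ∈ Sbc b c, pB (Θ x) (Θ y) ≤ 2⁻¹ * pB x y := by
    intro x hx y hy
    cases hl : lcp x y with
    | top =>
      have htop : lcp (Θ x) (Θ y) = ⊤ := by
        rw [eq_top_iff]
        refine le_of_forall_lt fun m hm => ?_
        cases m with
        | top => simp at hm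
        | coe m =>
          have hset := of_le_lcp (x := x) (y := y) (n := m) (by rw [hl]; exact le_top)
          have h2 := le_lcp (key x hx y hy m hset)
          refine lt_of_lt_of_le ?_ h2
          exact_mod_cast Nat.lt_succ_self m
      simp [pB, htop, hl]
    | coe n =>
      have hset := of_le_lcp (x := x) (y := y) (n := n) (le_of_eq hl.symm)
      have h2 : ((n + 1 : ℕ) : ℕ∞) ≤ lcp (Θ x) (Θ y) := le_lcp (key x hx y hy n hset)
      calc pB (Θ x) (Θ y) ≤ epow ((n + 1 : ℕ) : ℕ∞) := epow_anti h2
        _ = 2⁻¹ * pB x y := by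
            rw [epow_coe, pow_succ, mul_comm, pB, hl, epow_coe]
  set v := vWord a b c z with hvdef
  have hv : v ∈ Sbc b c := by
    refine ⟨?_, ?_, ?_, ?_⟩
    · intro k t h
      by_cases hk0 : k = 0
      · simp [hvdef, vWord, hk0] at h
      · simp only [hvdef, vWord, hk0, if_false, Option.some_inj] at h
        rw [← h]
        exact fAux_pos a b c z hc hz k
    · rw [vWord_len]; exact le_top
    · show (if 1 = 0 then none else some (fAux a b c z 1)) = some c
      simp [fAux_one]
    · intro k hk _ hkb
      simp only [hvdef, vWord, show k ≠ 0 by omega, if_false,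
        fAux_notmem a b c z hk (fun hcon => hkb hcon.2)]
  have hfix : Θ v = v := by
    apply PWord.ext'
    funext k
    rcases Nat.lt_or_ge k 2 with hk | hk
    · interval_cases k
      · rw [(Θ v).map_zero', v.map_zero']
      · rw [hone v hv]
        show _ = (if 1 = 0 then none else some (fAux a b c z 1))
        simp [fAux_one]
    · by_cases hkb : k ∈ omegaB b
      · obtain ⟨hk2, h1b⟩ := homega k hkb
        have e := hrec v hv k hkb (by rw [vWord_len]; exact le_top)
          (fAux a b c z (k / b))
          (by simp only [hvdef, vWord, show k / b ≠ 0 by omega, if_false])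
        rw [e]
        show _ = (if k = 0 then none else some (fAux a b c z k))
        rw [if_neg (by omega), fAux_mem a b c z hb hk hkb]
      · have e := hinf v hv k hk hkb (by rw [vWord_len]; exact le_top)
        rw [e]
        show _ = (if k = 0 then none else some (fAux a b c z k))
        rw [if_neg (by omega), fAux_notmem a b c z hk (fun hcon => hkb hcon.2)]
  refine ⟨contract, v, hv, hfix, vWord_len a b c z, ?_⟩
  intro u hu hfixu
  have h := contract u hu v hv
  rw [hfixu, hfix] at h
  have h0 : pB u v = 0 := by
    have hcoe : (pB u v : ℝ) ≤ 2⁻¹ * (pB u v : ℝ) := by exact_mod_cast h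
    have hnn : (0 : ℝ) ≤ (pB u v : ℝ) := (pB u v).coe_nonneg
    have : (pB u v : ℝ) = 0 := by linarith
    exact_mod_cast this
  have hlcp : lcp u v = ⊤ := by
    cases hl : lcp u v with
    | top => rfl
    | coe n =>
      rw [pB, hl, epow_coe] at h0
      exact absurd h0 (pow_ne_zero n (by norm_num))
  apply PWord.ext'
  funext k
  rcases Nat.eq_zero_or_pos k with hk0 | hk0
  · rw [hk0, u.map_zero', v.map_zero']
  · exact (of_le_lcp (x := u) (y := v) (n := k) (by rw [hlcp]; exact le_top) k hk0 le_rfl).2
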